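/- Every graph G with chromatic number χ(G) = Δ(G) + 1 ≥ 4 contains a clique on Δ(G) + 1 vertices (Brooks' Theorem, contrapositive form). -/

import Mathlib

open SimpleGraph

section BrooksAux


open SimpleGraph Finset

variable {V : Type*} [Fintype V] [DecidableEq V] {k : ℕ}

/-- `c` is a proper coloring on the vertex set `W`. -/
def GoodOn (G : SimpleGraph V) (c : V → Fin k) (W : Finset V) : Prop :=
  ∀ u ∈ W, ∀ w ∈ W, G.Adj u w → c u ≠ c w

lemma GoodOn.mono {G : SimpleGraph V} {c : V → Fin k} {W W' : Finset V}
    (h : GoodOn G c W) (hW : W' ⊆ W) : GoodOn G c W' :=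
  fun u hu w hw ha => h u (hW hu) w (hW hw) ha

lemma GoodOn.comp {G : SimpleGraph V} {c : V → Fin k} {W : Finset V}
    (h : GoodOn G c W) (σ : Fin k ≃ Fin k) : GoodOn G (σ ∘ c) W :=
  fun u hu w hw ha hc => h u hu w hw ha (σ.injective hc)

/-- gluing two good colorings along their intersection. -/
lemma GoodOn.glue {G : SimpleGraph V} {c₁ c₂ : V → Fin k} {W₁ W₂ : Finset V}
    (h₁ : GoodOn G c₁ W₁) (h₂ : GoodOn G c₂ W₂)
    (hagree : ∀ x ∈ W₁ ∩ W₂, c₁ x = c₂ x)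
    (hcross : ∀ u ∈ W₁, ∀ w ∈ W₂, u ∉ W₂ → w ∉ W₁ → ¬ G.Adj u w) :
    GoodOn G (fun x => if x ∈ W₁ then c₁ x else c₂ x) (W₁ ∪ W₂) := by
  intro u hu w hw ha
  simp only [mem_union] at hu hw
  by_cases hu1 : u ∈ W₁ <;> by_cases hw1 : w ∈ W₁ <;> simp only [hu1, hw1, if_pos, if_neg,
    if_true, if_false]
  · exact h₁ u hu1 w hw1 ha
  · have hw2 : w ∈ W₂ := hw.resolve_left hw1
    by_cases hu2 : u ∈ W₂
    · rw [hagree u (mem_inter.2 ⟨hu1, hu2⟩)]; exact h₂ u hu2 w hw2 ha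
    · exact absurd ha (hcross u hu1 w hw2 hu2 hw1)
  · have hu2 : u ∈ W₂ := hu.resolve_left hu1
    by_cases hw2 : w ∈ W₂
    · rw [hagree w (mem_inter.2 ⟨hw1, hw2⟩)]; exact h₂ u hu2 w hw2 ha
    · exact absurd ha.symm (hcross w hw1 u hu2 hw2 hu1)
  · exact h₂ u (hu.resolve_left hu1) w (hw.resolve_left hw1) ha

/-- a permutation of `Fin k` sending a given pair (distinct) to another given pair. -/
lemma exists_equiv_pair (a b a' b' : Fin k) (hab : a ≠ b) (hab' : a' ≠ b') :
    ∃ σ : Fin k ≃ Fin k, σ a = a' ∧ σ b = b' := by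
  set b₁ : Fin k := Equiv.swap a a' b with hb₁
  have hb₁a' : b₁ ≠ a' := by
    intro h
    have : b = a := by
      have := (Equiv.swap a a').injective (h.trans (Equiv.swap_apply_left a a').symm)
      exact this
    exact hab this.symm
  refine ⟨(Equiv.swap a a').trans (Equiv.swap b₁ b'), ?_, ?_⟩
  · simp only [Equiv.trans_apply, Equiv.swap_apply_left, ← hb₁]
    exact Equiv.swap_apply_of_ne_of_ne hb₁a'.symm hab'
  · simp only [Equiv.trans_apply, ← hb₁, Equiv.swap_apply_left]
/-- Greedy extension lemma: extend a good coloring of `W \ s` to all of `W`,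
provided every nonempty `T ⊆ s` has a vertex with few constrained neighbors. -/
lemma greedy_ext (G : SimpleGraph V) [DecidableRel G.Adj] :
    ∀ (s W : Finset V), s ⊆ W → ∀ (c₀ : V → Fin k), GoodOn G c₀ (W \ s) →
    (∀ T ⊆ s, T.Nonempty → ∃ v ∈ T,
      (G.neighborFinset v ∩ T).card + ((G.neighborFinset v ∩ (W \ s)).image c₀).card < k) →
    ∃ c : V → Fin k, (∀ x ∈ W \ s, c x = c₀ x) ∧ GoodOn G c W := by
  intro s
  induction s using Finset.strongInduction with
  | _ s ih =>
    intro W hsW c₀ hgood hcond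
    rcases s.eq_empty_or_nonempty with rfl | hne
    · exact ⟨c₀, fun x _ => rfl, by simpa using hgood⟩
    obtain ⟨v, hv, hvcard⟩ := hcond s (Finset.Subset.refl s) hne
    have hvW : v ∈ W := hsW hv
    set s' := s.erase v with hs'
    set W' := W.erase v with hW'
    have hdiff : W' \ s' = W \ s := by
      ext x
      simp only [hW', hs', mem_sdiff, mem_erase]
      constructor
      · rintro ⟨⟨hxv, hxW⟩, hxs⟩
        exact ⟨hxW, fun hxs' => hxs ⟨hxv, hxs'⟩⟩
      · rintro ⟨hxW, hxs⟩
        have hxv : x ≠ v := fun h => hxs (h ▸ hv)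
        exact ⟨⟨hxv, hxW⟩, fun h => hxs h.2⟩
    have hs'W' : s' ⊆ W' := fun x hx => by
      rw [hW', mem_erase]
      rw [hs', mem_erase] at hx
      exact ⟨hx.1, hsW hx.2⟩
    obtain ⟨c', hc'eq, hc'good⟩ := ih s' (Finset.erase_ssubset hv) W' hs'W' c₀
      (hdiff ▸ hgood)
      (by
        intro T hT hTne
        obtain ⟨u, hu, hucard⟩ := hcond T (hT.trans (Finset.erase_subset v s)) hTne
        exact ⟨u, hu, hdiff ▸ hucard⟩)
    -- now color v
    have hc'eq' : ∀ x ∈ W \ s, c' x = c₀ x := hdiff ▸ hc'eq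
    set U := (G.neighborFinset v ∩ W').image c' with hU
    have hUcard : U.card < k := by
      have hsplit : G.neighborFinset v ∩ W' ⊆ (G.neighborFinset v ∩ s') ∪ (G.neighborFinset v ∩ (W \ s)) := by
        intro x hx
        simp only [mem_inter] at hx
        by_cases hxs : x ∈ s'
        · exact mem_union_left _ (mem_inter.2 ⟨hx.1, hxs⟩)
        · exact mem_union_right _ (mem_inter.2 ⟨hx.1, hdiff ▸ (mem_sdiff.2 ⟨hx.2, hxs⟩)⟩)
      calc U.card ≤ ((G.neighborFinset v ∩ s').image c' ∪ (G.neighborFinset v ∩ (W \ s)).image c').card := by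
            apply Finset.card_le_card
            rw [← Finset.image_union]
            exact Finset.image_subset_image hsplit
        _ ≤ ((G.neighborFinset v ∩ s').image c').card + ((G.neighborFinset v ∩ (W \ s)).image c').card :=
            Finset.card_union_le _ _
        _ = ((G.neighborFinset v ∩ s').image c').card + ((G.neighborFinset v ∩ (W \ s)).image c₀).card := by
            congr 2
            apply Finset.image_congr
            intro x hx
            exact hc'eq' x (Finset.mem_coe.1 hx |> fun h => (Finset.mem_inter.1 h).2 |> fun h2 => (mem_sdiff.2 (mem_sdiff.1 h2)))
        _ ≤ (G.neighborFinset v ∩ s').card + ((G.neighborFinset v ∩ (W \ s)).image c₀).card := by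
            gcongr
            exact Finset.card_image_le
        _ ≤ (G.neighborFinset v ∩ s).card + ((G.neighborFinset v ∩ (W \ s)).image c₀).card := by
            gcongr
            exact Finset.erase_subset v s
        _ < k := hvcard
    obtain ⟨b, hb⟩ : ∃ b : Fin k, b ∉ U := by
      by_contra hcon
      push_neg at hcon
      have : (Finset.univ : Finset (Fin k)) ⊆ U := fun b _ => hcon b
      have := Finset.card_le_card this
      simp only [Finset.card_univ, Fintype.card_fin] at this
      omega
    refine ⟨Function.update c' v b, ?_, ?_⟩
    · intro x hx
      have hxv : x ≠ v := by
        rw [mem_sdiff] at hx; exact fun h => hx.2 (h ▸ hv)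
      rw [Function.update_of_ne hxv]
      exact hc'eq' x hx
    · intro u hu w hw ha
      by_cases huv : u = v <;> by_cases hwv : w = v
      · rw [huv, hwv] at ha; exact absurd ha (G.loopless.irrefl v)
      · rw [huv, Function.update_self, Function.update_of_ne hwv]
        intro h
        apply hb
        rw [hU, h]
        refine Finset.mem_image_of_mem c' (mem_inter.2 ⟨?_, mem_erase.2 ⟨hwv, hw⟩⟩)
        rw [SimpleGraph.mem_neighborFinset]
        exact huv ▸ ha
      · rw [hwv, Function.update_self, Function.update_of_ne huv]
        intro h
        apply hb
        rw [hU, ← h]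
        refine Finset.mem_image_of_mem c' (mem_inter.2 ⟨?_, mem_erase.2 ⟨huv, hu⟩⟩)
        rw [SimpleGraph.mem_neighborFinset]
        exact hwv ▸ ha.symm
      · rw [Function.update_of_ne huv, Function.update_of_ne hwv]
        exact hc'good u (mem_erase.2 ⟨huv, hu⟩) w (mem_erase.2 ⟨hwv, hw⟩) ha
lemma comap_cliqueFree {m : ℕ} (G : SimpleGraph V) (s : Finset V) (h : G.CliqueFree m) :
    (G.comap (Subtype.val : {x // x ∈ s} → V)).CliqueFree m := by
  intro t ht
  apply h (t.image Subtype.val)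
  constructor
  · intro u hu w hw huw
    simp only [coe_image, Set.mem_image, mem_coe] at hu hw
    obtain ⟨u', hu', rfl⟩ := hu
    obtain ⟨w', hw', rfl⟩ := hw
    have : u' ≠ w' := fun h => huw (h ▸ rfl)
    exact ht.1 hu' hw' this
  · rw [Finset.card_image_of_injective _ Subtype.val_injective, ht.2]

lemma comap_degree_le (G : SimpleGraph V) [DecidableRel G.Adj] (s : Finset V)
    (a : {x // x ∈ s}) :
    (G.comap (Subtype.val : {x // x ∈ s} → V)).degree a ≤ G.degree a.val := by
  rw [← card_neighborFinset_eq_degree, ← card_neighborFinset_eq_degree]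
  apply Finset.card_le_card_of_injOn Subtype.val
  · intro x hx
    rw [Finset.mem_coe, mem_neighborFinset] at hx ⊢
    exact hx
  · exact fun x _ y _ h => Subtype.ext h

lemma goodOn_of_colorable (G : SimpleGraph V) (s : Finset V) (hk : 0 < k)
    (h : (G.comap (Subtype.val : {x // x ∈ s} → V)).Colorable k) :
    ∃ c : V → Fin k, GoodOn G c s := by
  obtain ⟨C⟩ := h
  refine ⟨fun v => if hv : v ∈ s then C ⟨v, hv⟩ else ⟨0, hk⟩, ?_⟩
  intro u hu w hw ha
  simp only [dif_pos hu, dif_pos hw]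
  have : (G.comap (Subtype.val : {x // x ∈ s} → V)).Adj ⟨u, hu⟩ ⟨w, hw⟩ := ha
  exact C.valid this

lemma colorable_of_goodOn_univ (G : SimpleGraph V) {c : V → Fin k}
    (h : GoodOn G c univ) : G.Colorable k :=
  ⟨Coloring.mk c fun ha => h _ (mem_univ _) _ (mem_univ _) ha⟩
/-- The induced graph on `s` with one extra edge `x y` added. -/
def addPair (G : SimpleGraph V) (s : Finset V) (x y : V) (hxy : x ≠ y) :
    SimpleGraph {v // v ∈ s} where
  Adj a b := G.Adj a.1 b.1 ∨ (a.1 = x ∧ b.1 = y) ∨ (a.1 = y ∧ b.1 = x)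
  symm := by
    constructor
    rintro a b (h | ⟨h1, h2⟩ | ⟨h1, h2⟩)
    · exact Or.inl h.symm
    · exact Or.inr (Or.inr ⟨h2, h1⟩)
    · exact Or.inr (Or.inl ⟨h2, h1⟩)
  loopless := by
    constructor
    rintro a (h | ⟨h1, h2⟩ | ⟨h1, h2⟩)
    · exact G.loopless.irrefl a.1 h
    · exact hxy (h1 ▸ h2 ▸ rfl)
    · exact hxy (h2 ▸ h1 ▸ rfl)

instance addPair.decidableRel (G : SimpleGraph V) [DecidableRel G.Adj] (s : Finset V)
    (x y : V) (hxy : x ≠ y) : DecidableRel (addPair G s x y hxy).Adj := by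
  intro a b
  unfold addPair
  infer_instance

lemma addPair_degree_le (G : SimpleGraph V) [DecidableRel G.Adj] (s : Finset V)
    (x y : V) (hxy : x ≠ y) (hx : x ∈ s) (hy : y ∈ s)
    (hdegx : (G.neighborFinset x ∩ s).card < k) (hdegy : (G.neighborFinset y ∩ s).card < k)
    (hdeg : ∀ v, G.degree v ≤ k) (a : {v // v ∈ s}) :
    (addPair G s x y hxy).degree a ≤ k := by
  rw [← card_neighborFinset_eq_degree]
  by_cases hax : a.1 = x
  · calc ((addPair G s x y hxy).neighborFinset a).card
        ≤ (insert y (G.neighborFinset x ∩ s)).card := by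
          apply Finset.card_le_card_of_injOn Subtype.val
          · intro b hb
            rw [Finset.mem_coe, mem_neighborFinset] at hb
            rcases hb with h | ⟨h1, h2⟩ | ⟨h1, h2⟩
            · exact mem_insert.2 (Or.inr (mem_inter.2 ⟨(G.mem_neighborFinset _ _).2 (hax ▸ h), b.2⟩))
            · exact mem_insert.2 (Or.inl h2)
            · exact absurd (hax ▸ h1 : x = y) hxy
          · exact fun p _ q _ h => Subtype.ext h
      _ ≤ (G.neighborFinset x ∩ s).card + 1 := card_insert_le _ _
      _ ≤ k := hdegx
  · by_cases hay : a.1 = y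
    · calc ((addPair G s x y hxy).neighborFinset a).card
          ≤ (insert x (G.neighborFinset y ∩ s)).card := by
            apply Finset.card_le_card_of_injOn Subtype.val
            · intro b hb
              rw [Finset.mem_coe, mem_neighborFinset] at hb
              rcases hb with h | ⟨h1, h2⟩ | ⟨h1, h2⟩
              · exact mem_insert.2 (Or.inr (mem_inter.2 ⟨(G.mem_neighborFinset _ _).2 (hay ▸ h), b.2⟩))
              · exact absurd (hay ▸ h1 : y = x) hxy.symm
              · exact mem_insert.2 (Or.inl h2)
            · exact fun p _ q _ h => Subtype.ext h
        _ ≤ (G.neighborFinset y ∩ s).card + 1 := card_insert_le _ _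
        _ ≤ k := hdegy
    · calc ((addPair G s x y hxy).neighborFinset a).card
          ≤ (G.neighborFinset a.1).card := by
            apply Finset.card_le_card_of_injOn Subtype.val
            · intro b hb
              rw [Finset.mem_coe, mem_neighborFinset] at hb
              rcases hb with h | ⟨h1, h2⟩ | ⟨h1, h2⟩
              · exact (G.mem_neighborFinset _ _).2 h
              · exact absurd h1 hax
              · exact absurd h1 hay
            · exact fun p _ q _ h => Subtype.ext h
        _ ≤ k := by rw [card_neighborFinset_eq_degree]; exact hdeg a.1

lemma addPair_clique_structure (G : SimpleGraph V) (s : Finset V) (x y : V) (hxy : x ≠ y)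
    (hcf : G.CliqueFree (k + 1))
    (h : ¬ (addPair G s x y hxy).CliqueFree (k + 1)) :
    ∃ S : Finset V, ↑S ⊆ (s : Set V) ∧ x ∈ S ∧ y ∈ S ∧ S.card = k + 1 ∧
      (∀ u ∈ S, ∀ w ∈ S, u ≠ w → ¬(u = x ∧ w = y) → ¬(u = y ∧ w = x) → G.Adj u w) := by
  simp only [CliqueFree, not_forall, Classical.not_not] at h
  obtain ⟨t, ht⟩ := h
  set S := t.image Subtype.val with hS
  have hScard : S.card = k + 1 := by
    rw [hS, Finset.card_image_of_injective _ Subtype.val_injective, ht.2]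
  have hmem : ∀ u ∈ S, ∀ w ∈ S, u ≠ w →
      G.Adj u w ∨ (u = x ∧ w = y) ∨ (u = y ∧ w = x) := by
    intro u hu w hw huw
    rw [hS, mem_image] at hu hw
    obtain ⟨u', hu', rfl⟩ := hu
    obtain ⟨w', hw', rfl⟩ := hw
    exact ht.1 hu' hw' (fun h => huw (h ▸ rfl))
  have hsub : ↑S ⊆ (s : Set V) := by
    intro u hu
    rw [hS] at hu
    simp only [coe_image, Set.mem_image, mem_coe] at hu
    obtain ⟨u', _, rfl⟩ := hu
    exact u'.2
  have hxS : x ∈ S := by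
    by_contra hxS
    apply hcf S
    refine ⟨?_, hScard⟩
    intro u hu w hw huw
    rcases hmem u hu w hw huw with h | ⟨h1, _⟩ | ⟨_, h2⟩
    · exact h
    · exact absurd (h1 ▸ hu) (by exact_mod_cast hxS)
    · exact absurd (h2 ▸ hw) (by exact_mod_cast hxS)
  have hyS : y ∈ S := by
    by_contra hyS
    apply hcf S
    refine ⟨?_, hScard⟩
    intro u hu w hw huw
    rcases hmem u hu w hw huw with h | ⟨_, h2⟩ | ⟨h1, _⟩
    · exact h
    · exact absurd (h2 ▸ hw) (by exact_mod_cast hyS)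
    · exact absurd (h1 ▸ hu) (by exact_mod_cast hyS)
  refine ⟨S, hsub, hxS, hyS, hScard, ?_⟩
  intro u hu w hw huw hn1 hn2
  rcases hmem u hu w hw huw with h | h1 | h2
  · exact h
  · exact absurd h1 hn1
  · exact absurd h2 hn2

lemma addPair_goodOn (G : SimpleGraph V) (s : Finset V) (x y : V) (hxy : x ≠ y)
    (hx : x ∈ s) (hy : y ∈ s) (hk : 0 < k)
    (h : (addPair G s x y hxy).Colorable k) :
    ∃ c : V → Fin k, GoodOn G c s ∧ c x ≠ c y := by
  obtain ⟨C⟩ := h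
  refine ⟨fun v => if hv : v ∈ s then C ⟨v, hv⟩ else ⟨0, hk⟩, ?_, ?_⟩
  · intro u hu w hw ha
    simp only [dif_pos hu, dif_pos hw]
    have : (addPair G s x y hxy).Adj ⟨u, hu⟩ ⟨w, hw⟩ := Or.inl ha
    exact C.valid this
  · simp only [dif_pos hx, dif_pos hy]
    have : (addPair G s x y hxy).Adj ⟨x, hx⟩ ⟨y, hy⟩ := Or.inr (Or.inl ⟨rfl, rfl⟩)
    exact C.valid this

lemma brooks_main (k : ℕ) (hk : 3 ≤ k) :
    ∀ (n : ℕ) (V : Type u) [Fintype V] [DecidableEq V] (G : SimpleGraph V)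
      [DecidableRel G.Adj],
      Fintype.card V ≤ n → (∀ v, G.degree v ≤ k) → G.CliqueFree (k + 1) → G.Colorable k := by
  intro n
  induction n with
  | zero =>
    intro V _ _ G _ hcard _ _
    have : IsEmpty V := Fintype.card_eq_zero_iff.1 (Nat.le_zero.1 hcard)
    exact Colorable.of_isEmpty (G := G) k
  | succ n ih =>
    intro V _ _ G _ hcard hdeg hcf
    by_cases hV : Fintype.card V = 0
    · have : IsEmpty V := Fintype.card_eq_zero_iff.1 hV
      exact Colorable.of_isEmpty (G := G) k
    have hk0 : 0 < k := by omega
    -- the piece coloring tool, from the induction hypothesis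
    have hpiece : ∀ s : Finset V, s.card ≤ n → ∃ c : V → Fin k, GoodOn G c s := by
      intro s hs
      apply goodOn_of_colorable G s hk0
      apply ih
      · rw [Fintype.card_coe]; exact hs
      · intro a
        exact (comap_degree_le G s a).trans (hdeg a.1)
      · exact comap_cliqueFree G s hcf
    -- Case 1: G disconnected
    by_cases h1 : ∃ T : Finset V, T.Nonempty ∧ (∀ u ∈ T, ∀ w, G.Adj u w → w ∈ T) ∧ T ≠ Finset.univ
    · obtain ⟨T, hne, hcl, hTuniv⟩ := h1
      have hcardV : Finset.univ.card = Fintype.card V := Finset.card_univ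
      have hT1 : T.card ≤ n := by
        have := Finset.card_lt_card (Finset.ssubset_univ_iff.2 hTuniv)
        omega
      have hT2 : (Finset.univ \ T).card ≤ n := by
        rw [Finset.card_sdiff_of_subset (Finset.subset_univ T)]
        have := hne.card_pos
        omega
      obtain ⟨c₁, hc₁⟩ := hpiece T hT1
      obtain ⟨c₂, hc₂⟩ := hpiece (Finset.univ \ T) hT2
      have hglue := GoodOn.glue hc₁ hc₂ (fun x hx => by
          rw [Finset.inter_sdiff_self] at hx
          exact absurd hx (Finset.notMem_empty x))
        (fun u hu w hw hu2 hw1 ha => hw1 (hcl u hu w ha))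
      rw [Finset.union_sdiff_of_subset (Finset.subset_univ T)] at hglue
      exact colorable_of_goodOn_univ G hglue
    have hconn : ∀ T : Finset V, T.Nonempty → (∀ u ∈ T, ∀ w, G.Adj u w → w ∈ T) →
        ∀ z, z ∈ T := by
      intro T hne hcl z
      by_contra hz
      exact h1 ⟨T, hne, hcl, fun h => hz (h ▸ Finset.mem_univ z)⟩
    -- Case 2: some vertex of small degree
    by_cases h2 : ∃ v, G.degree v < k
    · obtain ⟨v₀, hv₀⟩ := h2
      have hgood0 : GoodOn G (fun _ => (⟨0, hk0⟩ : Fin k)) (Finset.univ \ Finset.univ) := by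
        intro u hu
        rw [Finset.sdiff_self] at hu
        exact absurd hu (Finset.notMem_empty u)
      obtain ⟨c, -, hc⟩ := greedy_ext G Finset.univ Finset.univ (Finset.Subset.refl _)
        (fun _ => (⟨0, hk0⟩ : Fin k)) hgood0 (by
          intro T hT hTne
          have hz : ∀ v : V, ((G.neighborFinset v ∩ (Finset.univ \ Finset.univ)).image
              (fun _ => (⟨0, hk0⟩ : Fin k))).card = 0 := by
            intro v
            rw [Finset.sdiff_self, Finset.inter_empty, Finset.image_empty, Finset.card_empty]
          by_cases hv₀T : v₀ ∈ T
          · refine ⟨v₀, hv₀T, ?_⟩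
            rw [hz]
            have : (G.neighborFinset v₀ ∩ T).card ≤ G.degree v₀ := by
              rw [← SimpleGraph.card_neighborFinset_eq_degree]
              exact Finset.card_le_card (Finset.inter_subset_left)
            omega
          · by_cases hesc : ∃ v ∈ T, ∃ w, G.Adj v w ∧ w ∉ T
            · obtain ⟨v, hvT, w, hadj, hwT⟩ := hesc
              refine ⟨v, hvT, ?_⟩
              rw [hz]
              have hsub : G.neighborFinset v ∩ T ⊆ (G.neighborFinset v).erase w := by
                intro x hx
                rw [Finset.mem_inter] at hx
                exact Finset.mem_erase.2 ⟨fun h => hwT (h ▸ hx.2), hx.1⟩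
              have hcard := Finset.card_le_card hsub
              rw [Finset.card_erase_of_mem ((G.mem_neighborFinset v w).2 hadj)] at hcard
              have hdegv : (G.neighborFinset v).card ≤ k := by
                rw [SimpleGraph.card_neighborFinset_eq_degree]; exact hdeg v
              have hwmem : w ∈ G.neighborFinset v := (G.mem_neighborFinset v w).2 hadj
              have : 0 < (G.neighborFinset v).card := Finset.card_pos.2 ⟨w, hwmem⟩
              omega
            · exfalso
              push_neg at hesc
              exact hv₀T (hconn T hTne (fun u hu w ha => hesc u hu w ha) v₀))
      exact colorable_of_goodOn_univ G hc
    have hreg : ∀ v, (G.neighborFinset v).card = k := by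
      intro v
      rw [SimpleGraph.card_neighborFinset_eq_degree]
      have := hdeg v
      have h2' := h2
      push_neg at h2'
      exact le_antisymm this (h2' v)
    -- Case 3: a cut vertex
    by_cases h3 : ∃ v, ∃ T : Finset V, T.Nonempty ∧ v ∉ T ∧
        (∀ u ∈ T, ∀ w, G.Adj u w → w ≠ v → w ∈ T) ∧ insert v T ≠ Finset.univ
    · obtain ⟨v, T, hne, hvT, hcl, hTuniv⟩ := h3
      set R := Finset.univ \ insert v T with hR
      have hRne : R.Nonempty := by
        rw [hR, Finset.sdiff_nonempty]
        exact fun h => hTuniv (Finset.univ_subset_iff.1 h)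
      have hcardV : Finset.univ.card = Fintype.card V := Finset.card_univ
      have hs₁ : (insert v T).card ≤ n := by
        have := Finset.card_lt_card (Finset.ssubset_univ_iff.2 hTuniv)
        omega
      have hs₂ : (insert v R).card ≤ n := by
        obtain ⟨t, ht⟩ := hne
        have htv : t ≠ v := fun h => hvT (h ▸ ht)
        have htR : t ∉ insert v R := by
          rw [Finset.mem_insert, hR]
          rintro (h | h)
          · exact htv h
          · rw [Finset.mem_sdiff] at h
            exact h.2 (Finset.mem_insert.2 (Or.inr ht))
        have : insert v R ≠ Finset.univ := by
          intro h
          rw [h] at htR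
          exact htR (Finset.mem_univ t)
        have := Finset.card_lt_card (Finset.ssubset_univ_iff.2 this)
        omega
      obtain ⟨c₁, hc₁⟩ := hpiece _ hs₁
      obtain ⟨c₂0, hc₂0⟩ := hpiece _ hs₂
      set σ := Equiv.swap (c₂0 v) (c₁ v) with hσ
      have hc₂ : GoodOn G (σ ∘ c₂0) (insert v R) := GoodOn.comp hc₂0 σ
      have hc₂v : (σ ∘ c₂0) v = c₁ v := by
        rw [Function.comp_apply, hσ, Equiv.swap_apply_left]
      have hglue := GoodOn.glue hc₁ hc₂ (by
          intro x hx
          rw [Finset.mem_inter, Finset.mem_insert, Finset.mem_insert] at hx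
          obtain ⟨h1, h2⟩ := hx
          rcases h1 with rfl | h1
          · exact hc₂v.symm
          · rcases h2 with rfl | h2
            · exact hc₂v.symm
            · rw [hR, Finset.mem_sdiff] at h2
              exact absurd (Finset.mem_insert.2 (Or.inr h1)) h2.2)
        (by
          intro p hp w hw hp2 hw1 hadj
          have hpT : p ∈ T := by
            rcases Finset.mem_insert.1 hp with rfl | h
            · exact absurd (Finset.mem_insert_self p R) hp2
            · exact h
          have hwv : w ≠ v := fun h => hw1 (h ▸ Finset.mem_insert_self v T)
          exact hw1 (Finset.mem_insert.2 (Or.inr (hcl p hpT w hadj hwv))))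
      have huniv : insert v T ∪ insert v R = Finset.univ := by
        apply Finset.eq_univ_iff_forall.2
        intro z
        rw [Finset.mem_union]
        by_cases hz : z ∈ insert v T
        · exact Or.inl hz
        · exact Or.inr (Finset.mem_insert.2 (Or.inr (by rw [hR, Finset.mem_sdiff]; exact ⟨Finset.mem_univ z, hz⟩)))
      rw [huniv] at hglue
      exact colorable_of_goodOn_univ G hglue
    have hcut1 : ∀ (v : V) (T : Finset V), T.Nonempty → v ∉ T →
        (∀ u ∈ T, ∀ w, G.Adj u w → w ≠ v → w ∈ T) → insert v T = Finset.univ := by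
      intro v T hne hv hcl
      by_contra h
      exact h3 ⟨v, T, hne, hv, hcl, h⟩
    -- Case 4: a 2-cut
    by_cases h4 : ∃ x y, x ≠ y ∧ ∃ T : Finset V, T.Nonempty ∧ x ∉ T ∧ y ∉ T ∧
        (∀ u ∈ T, ∀ w, G.Adj u w → w ≠ x → w ≠ y → w ∈ T) ∧
        insert x (insert y T) ≠ Finset.univ
    · obtain ⟨x, y, hxy, T, hne, hxT, hyT, hcl, hTuniv⟩ := h4
      set P₁ := insert x (insert y T) with hP₁
      set C₂ := Finset.univ \ P₁ with hC₂
      set P₂ := insert x (insert y C₂) with hP₂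
      have hcardV : Finset.univ.card = Fintype.card V := Finset.card_univ
      have hC₂ne : C₂.Nonempty := by
        rw [hC₂, Finset.sdiff_nonempty]
        exact fun h => hTuniv (Finset.univ_subset_iff.1 h)
      have hxC₂ : x ∉ C₂ := by
        rw [hC₂, Finset.mem_sdiff]; rintro ⟨-, h⟩; exact h (Finset.mem_insert_self x _)
      have hyC₂ : y ∉ C₂ := by
        rw [hC₂, Finset.mem_sdiff]; rintro ⟨-, h⟩
        exact h (Finset.mem_insert.2 (Or.inr (Finset.mem_insert_self y T)))
      have hdisj : ∀ z, z ∈ T → z ∈ C₂ → False := by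
        intro z h1 h2
        rw [hC₂, Finset.mem_sdiff] at h2
        exact h2.2 (Finset.mem_insert.2 (Or.inr (Finset.mem_insert.2 (Or.inr h1))))
      have hmemC₂ : ∀ z, z ≠ x → z ≠ y → z ∉ T → z ∈ C₂ := by
        intro z h1 h2 h3
        rw [hC₂, Finset.mem_sdiff]
        refine ⟨Finset.mem_univ z, ?_⟩
        intro h
        rcases Finset.mem_insert.1 h with h | h
        · exact h1 h
        · rcases Finset.mem_insert.1 h with h | h
          · exact h2 h
          · exact h3 h
      have hcl₂ : ∀ u ∈ C₂, ∀ w, G.Adj u w → w ≠ x → w ≠ y → w ∈ C₂ := by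
        intro u hu w hadj hwx hwy
        refine hmemC₂ w hwx hwy ?_
        intro hwT
        have huT := hcl w hwT u hadj.symm
          (fun h => hxC₂ (h ▸ hu)) (fun h => hyC₂ (h ▸ hu))
        exact hdisj u huT hu
      have key : ∀ p q : V, p ≠ q → ¬ G.Adj p q → ∀ C : Finset V, C.Nonempty → p ∉ C → q ∉ C →
          (∀ u ∈ C, ∀ w, G.Adj u w → w ≠ p → w ≠ q → w ∈ C) → ∃ w ∈ C, G.Adj p w := by
        intro p q hpq _ C hCne hpC hqC hClcl
        by_contra hno
        push_neg at hno
        have hclq : ∀ u ∈ C, ∀ w, G.Adj u w → w ≠ q → w ∈ C := by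
          intro u hu w hadj hwq
          by_cases hwp : w = p
          · exact absurd (hwp ▸ hadj).symm (hno u hu)
          · exact hClcl u hu w hadj hwp hwq
        have huniv := hcut1 q C hCne hqC hclq
        have hp : p ∈ insert q C := huniv ▸ Finset.mem_univ p
        rcases Finset.mem_insert.1 hp with h | h
        · exact hpq h
        · exact hpC h
      -- cardinalities of the pieces
      have hP₁card : P₁.card ≤ n := by
        have := Finset.card_lt_card (Finset.ssubset_univ_iff.2 hTuniv)
        omega
      have hP₂card : P₂.card ≤ n := by
        obtain ⟨t, ht⟩ := hne
        have htP₂ : t ∉ P₂ := by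
          rw [hP₂, Finset.mem_insert, Finset.mem_insert]
          rintro (rfl | rfl | h)
          · exact hxT ht
          · exact hyT ht
          · exact hdisj t ht h
        have : P₂ ≠ Finset.univ := by
          intro h; rw [h] at htP₂; exact htP₂ (Finset.mem_univ t)
        have := Finset.card_lt_card (Finset.ssubset_univ_iff.2 this)
        omega
      have hxP₁ : x ∈ P₁ := Finset.mem_insert_self x _
      have hyP₁ : y ∈ P₁ := Finset.mem_insert.2 (Or.inr (Finset.mem_insert_self y T))
      have hxP₂ : x ∈ P₂ := Finset.mem_insert_self x _
      have hyP₂ : y ∈ P₂ := Finset.mem_insert.2 (Or.inr (Finset.mem_insert_self y C₂))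
      have hmemP₁ : ∀ z ∈ P₁, z = x ∨ z = y ∨ z ∈ T := by
        intro z hz
        rcases Finset.mem_insert.1 hz with h | h
        · exact Or.inl h
        · rcases Finset.mem_insert.1 h with h | h
          · exact Or.inr (Or.inl h)
          · exact Or.inr (Or.inr h)
      have hmemP₂ : ∀ z ∈ P₂, z = x ∨ z = y ∨ z ∈ C₂ := by
        intro z hz
        rcases Finset.mem_insert.1 hz with h | h
        · exact Or.inl h
        · rcases Finset.mem_insert.1 h with h | h
          · exact Or.inr (Or.inl h)
          · exact Or.inr (Or.inr h)
      have hPunion : P₁ ∪ P₂ = Finset.univ := by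
        apply Finset.eq_univ_iff_forall.2
        intro z
        rw [Finset.mem_union]
        by_cases h1 : z ∈ P₁
        · exact Or.inl h1
        · refine Or.inr ?_
          rw [hP₂, Finset.mem_insert, Finset.mem_insert]
          refine Or.inr (Or.inr ?_)
          rw [hC₂, Finset.mem_sdiff]
          exact ⟨Finset.mem_univ z, h1⟩
      -- gluing two colorings which differ on x and y
      have glueDiff : ∀ c₁ c₂ : V → Fin k, GoodOn G c₁ P₁ → GoodOn G c₂ P₂ →
          c₁ x ≠ c₁ y → c₂ x ≠ c₂ y → G.Colorable k := by
        intro c₁ c₂ hc₁ hc₂ hd₁ hd₂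
        obtain ⟨σ₁, hσ₁x, hσ₁y⟩ := exists_equiv_pair (c₁ x) (c₁ y) ⟨0, hk0⟩ ⟨1, by omega⟩ hd₁
          (fun h => by simpa using congrArg Fin.val h)
        obtain ⟨σ₂, hσ₂x, hσ₂y⟩ := exists_equiv_pair (c₂ x) (c₂ y) ⟨0, hk0⟩ ⟨1, by omega⟩ hd₂
          (fun h => by simpa using congrArg Fin.val h)
        have hg₁ := GoodOn.comp hc₁ σ₁
        have hg₂ := GoodOn.comp hc₂ σ₂
        have hglue := GoodOn.glue hg₁ hg₂ (by
            intro z hz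
            rw [Finset.mem_inter] at hz
            rcases hmemP₁ z hz.1 with rfl | rfl | h
            · rw [Function.comp_apply, Function.comp_apply, hσ₁x, hσ₂x]
            · rw [Function.comp_apply, Function.comp_apply, hσ₁y, hσ₂y]
            · rcases hmemP₂ z hz.2 with rfl | rfl | h2
              · exact absurd h hxT
              · exact absurd h hyT
              · exact (hdisj z h h2).elim)
          (by
            intro u hu w hw hu2 hw1 hadj
            have huT : u ∈ T := by
              rcases hmemP₁ u hu with rfl | rfl | h
              · exact absurd hxP₂ hu2
              · exact absurd hyP₂ hu2
              · exact h
            have hwC₂ : w ∈ C₂ := by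
              rcases hmemP₂ w hw with rfl | rfl | h
              · exact absurd hxP₁ hw1
              · exact absurd hyP₁ hw1
              · exact h
            have hwx : w ≠ x := fun h => hxC₂ (h ▸ hwC₂)
            have hwy : w ≠ y := fun h => hyC₂ (h ▸ hwC₂)
            exact hdisj w (hcl u huT w hadj hwx hwy) hwC₂)
        rw [hPunion] at hglue
        exact colorable_of_goodOn_univ G hglue
      by_cases hadjxy : G.Adj x y
      · -- Case 4a : x ~ y
        obtain ⟨c₁, hc₁⟩ := hpiece P₁ hP₁card
        obtain ⟨c₂, hc₂⟩ := hpiece P₂ hP₂card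
        exact glueDiff c₁ c₂ hc₁ hc₂ (hc₁ x hxP₁ y hyP₁ hadjxy) (hc₂ x hxP₂ y hyP₂ hadjxy)
      · -- Case 4b : x and y not adjacent
        have hbound : ∀ (p : V) (P : Finset V), (∃ w, G.Adj p w ∧ w ∉ P) →
            (G.neighborFinset p ∩ P).card < k := by
          rintro p P ⟨w, hadj, hwP⟩
          have hsub : G.neighborFinset p ∩ P ⊆ (G.neighborFinset p).erase w := fun z hz =>
            Finset.mem_erase.2 ⟨fun h => hwP (h ▸ (Finset.mem_inter.1 hz).2),
              (Finset.mem_inter.1 hz).1⟩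
          have := Finset.card_le_card hsub
          rw [Finset.card_erase_of_mem ((G.mem_neighborFinset p w).2 hadj), hreg p] at this
          omega
        have hclT : ∀ u ∈ T, ∀ w, G.Adj u w → w ≠ x → w ≠ y → w ∈ T := hcl
        have hxnbC₂ : ∃ w ∈ C₂, G.Adj x w := key x y hxy hadjxy C₂ hC₂ne hxC₂ hyC₂ hcl₂
        have hynbC₂ : ∃ w ∈ C₂, G.Adj y w := key y x hxy.symm (fun h => hadjxy h.symm) C₂
          hC₂ne hyC₂ hxC₂ (fun u hu w ha h1 h2 => hcl₂ u hu w ha h2 h1)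
        have hxnbT : ∃ w ∈ T, G.Adj x w := key x y hxy hadjxy T hne hxT hyT hclT
        have hynbT : ∃ w ∈ T, G.Adj y w := key y x hxy.symm (fun h => hadjxy h.symm) T
          hne hyT hxT (fun u hu w ha h1 h2 => hclT u hu w ha h2 h1)
        have hwP₁ : ∀ w ∈ C₂, w ∉ P₁ := by
          intro w hw hwP₁
          rcases hmemP₁ w hwP₁ with rfl | rfl | h
          · exact hxC₂ hw
          · exact hyC₂ hw
          · exact hdisj w h hw
        have hwP₂ : ∀ w ∈ T, w ∉ P₂ := by
          intro w hw hwP₂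
          rcases hmemP₂ w hwP₂ with rfl | rfl | h
          · exact hxT hw
          · exact hyT hw
          · exact hdisj w hw h
        -- the symmetric "forced same color" case
        have sameCase : ∀ C D : Finset V, x ∉ C → y ∉ C → x ∉ D → y ∉ D →
            (∀ z, z ∈ C → z ∈ D → False) →
            (∀ z, z ≠ x → z ≠ y → z ∉ C → z ∈ D) →
            (∀ u ∈ C, ∀ w, G.Adj u w → w ≠ x → w ≠ y → w ∈ C) →
            (∀ u ∈ D, ∀ w, G.Adj u w → w ≠ x → w ≠ y → w ∈ D) →
            (∃ w ∈ D, G.Adj x w) → (∃ w ∈ D, G.Adj y w) →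
            (insert x C).card ≤ n → D.card ≤ n →
            ∀ S : Finset V, S ⊆ insert x (insert y C) → x ∈ S → y ∈ S → S.card = k + 1 →
            (∀ u ∈ S, ∀ w ∈ S, u ≠ w → ¬(u = x ∧ w = y) → ¬(u = y ∧ w = x) → G.Adj u w) →
            G.Colorable k := by
          intro C D hxC hyC hxD hyD hCD hmemD hclC hclD hxnbD hynbD hCcard hDcard
            S hSsub hxS hyS hScard hSadj
          set Q := S \ {x, y} with hQ
          have hmemQ : ∀ q, q ∈ Q ↔ q ∈ S ∧ q ≠ x ∧ q ≠ y := by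
            intro q
            rw [hQ, Finset.mem_sdiff, Finset.mem_insert, Finset.mem_singleton]
            constructor
            · rintro ⟨h1, h2⟩; exact ⟨h1, fun h => h2 (Or.inl h), fun h => h2 (Or.inr h)⟩
            · rintro ⟨h1, h2, h3⟩; exact ⟨h1, fun h => h.elim h2 h3⟩
          have hxyS : ({x, y} : Finset V) ⊆ S := by
            intro z hz
            rcases Finset.mem_insert.1 hz with rfl | hz
            · exact hxS
            · rw [Finset.mem_singleton] at hz; exact hz ▸ hyS
          have hQcard : Q.card = k - 1 := by
            rw [hQ, Finset.card_sdiff_of_subset hxyS, hScard,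
              Finset.card_insert_of_notMem (fun h => hxy (Finset.mem_singleton.1 h)),
              Finset.card_singleton]
            omega
          have hQC : ∀ q ∈ Q, q ∈ C := by
            intro q hq
            rw [hmemQ] at hq
            rcases Finset.mem_insert.1 (hSsub hq.1) with h | h
            · exact absurd h hq.2.1
            · rcases Finset.mem_insert.1 h with h | h
              · exact absurd h hq.2.2
              · exact h
          have hQx : ∀ q ∈ Q, G.Adj x q := by
            intro q hq
            rw [hmemQ] at hq
            exact hSadj x hxS q hq.1 (fun h => hq.2.1 h.symm)
              (fun h => hq.2.2 h.2) (fun h => hxy h.1)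
          have hQy : ∀ q ∈ Q, G.Adj y q := by
            intro q hq
            rw [hmemQ] at hq
            exact hSadj y hyS q hq.1 (fun h => hq.2.2 h.symm)
              (fun h => hxy h.1.symm) (fun h => hq.2.1 h.2)
          have hNxC : Q = G.neighborFinset x ∩ C := by
            apply Finset.eq_of_subset_of_card_le
            · intro q hq
              exact Finset.mem_inter.2 ⟨(G.mem_neighborFinset x q).2 (hQx q hq), hQC q hq⟩
            · obtain ⟨w, hwD, hwadj⟩ := hxnbD
              have := hbound x C ⟨w, hwadj, fun h => hCD w h hwD⟩
              omega
          have hNyC : Q = G.neighborFinset y ∩ C := by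
            apply Finset.eq_of_subset_of_card_le
            · intro q hq
              exact Finset.mem_inter.2 ⟨(G.mem_neighborFinset y q).2 (hQy q hq), hQC q hq⟩
            · obtain ⟨w, hwD, hwadj⟩ := hynbD
              have := hbound y C ⟨w, hwadj, fun h => hCD w h hwD⟩
              omega
          -- the unique neighbors of x and y in D
          have huniqNbr : ∀ p : V, ¬ G.Adj p x → ¬ G.Adj p y →
              Q = G.neighborFinset p ∩ C → (G.neighborFinset p ∩ D).card = 1 := by
            intro p hnx hny hNpC
            have hsplit : G.neighborFinset p = (G.neighborFinset p ∩ C) ∪ (G.neighborFinset p ∩ D) := by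
              apply Finset.Subset.antisymm
              · intro z hz
                have hzx : z ≠ x := fun h => hnx (h ▸ (G.mem_neighborFinset p z).1 hz)
                have hzy : z ≠ y := fun h => hny (h ▸ (G.mem_neighborFinset p z).1 hz)
                by_cases hzC : z ∈ C
                · exact Finset.mem_union_left _ (Finset.mem_inter.2 ⟨hz, hzC⟩)
                · exact Finset.mem_union_right _ (Finset.mem_inter.2 ⟨hz, hmemD z hzx hzy hzC⟩)
              · intro z hz
                rcases Finset.mem_union.1 hz with h | h
                · exact (Finset.mem_inter.1 h).1
                · exact (Finset.mem_inter.1 h).1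
            have hdisjCD : Disjoint (G.neighborFinset p ∩ C) (G.neighborFinset p ∩ D) := by
              rw [Finset.disjoint_left]
              intro z h1 h2
              exact hCD z (Finset.mem_inter.1 h1).2 (Finset.mem_inter.1 h2).2
            have hcards : (G.neighborFinset p ∩ C).card + (G.neighborFinset p ∩ D).card = k := by
              rw [← Finset.card_union_of_disjoint hdisjCD, ← hsplit, hreg p]
            rw [← hNpC, hQcard] at hcards
            omega
          obtain ⟨x', hx'⟩ := Finset.card_eq_one.1
            (huniqNbr x (G.loopless.irrefl x) hadjxy hNxC)
          obtain ⟨y', hy'⟩ := Finset.card_eq_one.1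
            (huniqNbr y (fun h => hadjxy h.symm) (G.loopless.irrefl y) hNyC)
          have hx'mem : x' ∈ D ∧ G.Adj x x' := by
            have : x' ∈ G.neighborFinset x ∩ D := by
              rw [hx']; exact Finset.mem_singleton_self x'
            rw [Finset.mem_inter] at this
            exact ⟨this.2, (G.mem_neighborFinset x x').1 this.1⟩
          have hy'mem : y' ∈ D ∧ G.Adj y y' := by
            have : y' ∈ G.neighborFinset y ∩ D := by
              rw [hy']; exact Finset.mem_singleton_self y'
            rw [Finset.mem_inter] at this
            exact ⟨this.2, (G.mem_neighborFinset y y').1 this.1⟩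
          -- the coloring of the C side, giving x and y the same color
          obtain ⟨c, hc⟩ := hpiece (insert x C) hCcard
          have hynC : y ∉ insert x C := by
            rw [Finset.mem_insert]
            rintro (h | h)
            · exact hxy h.symm
            · exact hyC h
          set c₁ := Function.update c y (c x) with hc₁def
          have hc₁x : c₁ x = c x := by
            rw [hc₁def, Function.update_of_ne hxy]
          have hc₁y : c₁ y = c x := by
            rw [hc₁def, Function.update_self]
          have hc₁mem : ∀ z ∈ insert x C, c₁ z = c z := by
            intro z hz
            rw [hc₁def, Function.update_of_ne (fun h => hynC (by rw [← h]; exact hz))]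
          have hc₁good : GoodOn G c₁ (insert x (insert y C)) := by
            have hmemPC : ∀ z ∈ insert x (insert y C), z = y ∨ z ∈ insert x C := by
              intro z hz
              rcases Finset.mem_insert.1 hz with rfl | hz
              · exact Or.inr (Finset.mem_insert_self z C)
              · rcases Finset.mem_insert.1 hz with rfl | hz
                · exact Or.inl rfl
                · exact Or.inr (Finset.mem_insert.2 (Or.inr hz))
            have hyadj : ∀ w ∈ insert x C, G.Adj y w → c x ≠ c w := by
              intro w hw hadj
              rcases Finset.mem_insert.1 hw with rfl | hwC
              · exact absurd hadj.symm hadjxy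
              · have hwQ : w ∈ Q := by
                  rw [hNyC]
                  exact Finset.mem_inter.2 ⟨(G.mem_neighborFinset y w).2 hadj, hwC⟩
                exact hc x (Finset.mem_insert_self x C) w hw (hQx w hwQ)
            intro u hu w hw hadj
            rcases hmemPC u hu with rfl | huC
            · rcases hmemPC w hw with rfl | hwC
              · exact absurd hadj (G.loopless.irrefl _)
              · rw [hc₁y, hc₁mem w hwC]
                exact hyadj w hwC hadj
            · rcases hmemPC w hw with rfl | hwC
              · rw [hc₁y, hc₁mem u huC]
                exact (hyadj u huC hadj.symm).symm
              · rw [hc₁mem u huC, hc₁mem w hwC]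
                exact hc u huC w hwC hadj
          -- the coloring of the D side, giving x and y the same fresh color
          obtain ⟨c₂₀, hc₂₀⟩ := hpiece D hDcard
          obtain ⟨b, hb⟩ : ∃ b : Fin k, b ∉ ({c₂₀ x', c₂₀ y'} : Finset (Fin k)) := by
            by_contra hcon
            push_neg at hcon
            have h1 : (Finset.univ : Finset (Fin k)) ⊆ {c₂₀ x', c₂₀ y'} := fun z _ => hcon z
            have h2 := Finset.card_le_card h1
            have h3 : ({c₂₀ x', c₂₀ y'} : Finset (Fin k)).card ≤ 2 :=
              (Finset.card_insert_le _ _).trans (by rw [Finset.card_singleton])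
            rw [Finset.card_univ, Fintype.card_fin] at h2
            omega
          have hbx' : b ≠ c₂₀ x' := fun h => hb (h ▸ Finset.mem_insert_self _ _)
          have hby' : b ≠ c₂₀ y' := fun h =>
            hb (h ▸ Finset.mem_insert.2 (Or.inr (Finset.mem_singleton_self _)))
          set c₂ := Function.update (Function.update c₂₀ x b) y b with hc₂def
          have hc₂x : c₂ x = b := by
            rw [hc₂def, Function.update_of_ne hxy, Function.update_self]
          have hc₂y : c₂ y = b := by
            rw [hc₂def, Function.update_self]
          have hc₂mem : ∀ z ∈ D, c₂ z = c₂₀ z := by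
            intro z hz
            rw [hc₂def, Function.update_of_ne (fun h => hyD (by rw [← h]; exact hz)),
              Function.update_of_ne (fun h => hxD (by rw [← h]; exact hz))]
          have hc₂good : GoodOn G c₂ (insert x (insert y D)) := by
            have hmemPD : ∀ z ∈ insert x (insert y D), z = x ∨ z = y ∨ z ∈ D := by
              intro z hz
              rcases Finset.mem_insert.1 hz with rfl | hz
              · exact Or.inl rfl
              · rcases Finset.mem_insert.1 hz with rfl | hz
                · exact Or.inr (Or.inl rfl)
                · exact Or.inr (Or.inr hz)
            have hxside : ∀ w ∈ D, G.Adj x w → b ≠ c₂₀ w := by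
              intro w hw hadj
              have : w ∈ G.neighborFinset x ∩ D :=
                Finset.mem_inter.2 ⟨(G.mem_neighborFinset x w).2 hadj, hw⟩
              rw [hx', Finset.mem_singleton] at this
              rw [this]
              exact hbx'
            have hyside : ∀ w ∈ D, G.Adj y w → b ≠ c₂₀ w := by
              intro w hw hadj
              have : w ∈ G.neighborFinset y ∩ D :=
                Finset.mem_inter.2 ⟨(G.mem_neighborFinset y w).2 hadj, hw⟩
              rw [hy', Finset.mem_singleton] at this
              rw [this]
              exact hby'
            intro u hu w hw hadj
            rcases hmemPD u hu with rfl | rfl | huD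
            · rcases hmemPD w hw with rfl | rfl | hwD
              · exact absurd hadj (G.loopless.irrefl _)
              · exact absurd hadj hadjxy
              · rw [hc₂x, hc₂mem w hwD]
                exact hxside w hwD hadj
            · rcases hmemPD w hw with rfl | rfl | hwD
              · exact absurd hadj.symm hadjxy
              · exact absurd hadj (G.loopless.irrefl _)
              · rw [hc₂y, hc₂mem w hwD]
                exact hyside w hwD hadj
            · rcases hmemPD w hw with rfl | rfl | hwD
              · rw [hc₂x, hc₂mem u huD]
                exact (hxside u huD hadj.symm).symm
              · rw [hc₂y, hc₂mem u huD]
                exact (hyside u huD hadj.symm).symm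
              · rw [hc₂mem u huD, hc₂mem w hwD]
                exact hc₂₀ u huD w hwD hadj
          -- glue the two pieces
          set σ := Equiv.swap b (c x) with hσdef
          have hσb : σ b = c x := by rw [hσdef, Equiv.swap_apply_left]
          have hd₂ := GoodOn.comp hc₂good σ
          have hglue := GoodOn.glue hc₁good hd₂ (by
              intro z hz
              rw [Finset.mem_inter] at hz
              have h1 := hz.1
              have h2 := hz.2
              rcases Finset.mem_insert.1 h1 with rfl | h1'
              · rw [hc₁x, Function.comp_apply, hc₂x, hσb]
              · rcases Finset.mem_insert.1 h1' with rfl | h1''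
                · rw [hc₁y, Function.comp_apply, hc₂y, hσb]
                · rcases Finset.mem_insert.1 h2 with rfl | h2'
                  · exact absurd h1'' hxC
                  · rcases Finset.mem_insert.1 h2' with rfl | h2''
                    · exact absurd h1'' hyC
                    · exact (hCD z h1'' h2'').elim)
            (by
              intro u hu w hw hu2 hw1 hadj
              have huC : u ∈ C := by
                rcases Finset.mem_insert.1 hu with rfl | hu'
                · exact absurd (Finset.mem_insert_self u _) hu2
                · rcases Finset.mem_insert.1 hu' with rfl | hu''
                  · exact absurd (Finset.mem_insert.2
                      (Or.inr (Finset.mem_insert_self u D))) hu2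
                  · exact hu''
              have hwD : w ∈ D := by
                rcases Finset.mem_insert.1 hw with rfl | hw'
                · exact absurd (Finset.mem_insert_self w _) hw1
                · rcases Finset.mem_insert.1 hw' with rfl | hw''
                  · exact absurd (Finset.mem_insert.2
                      (Or.inr (Finset.mem_insert_self w C))) hw1
                  · exact hw''
              have hwx : w ≠ x := fun h => hxD (h ▸ hwD)
              have hwy : w ≠ y := fun h => hyD (h ▸ hwD)
              exact hCD w (hclC u huC w hadj hwx hwy) hwD)
          have huniv : insert x (insert y C) ∪ insert x (insert y D) = Finset.univ := by
            apply Finset.eq_univ_iff_forall.2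
            intro z
            rw [Finset.mem_union, Finset.mem_insert, Finset.mem_insert,
              Finset.mem_insert, Finset.mem_insert]
            by_cases h1 : z = x
            · exact Or.inl (Or.inl h1)
            · by_cases h2 : z = y
              · exact Or.inl (Or.inr (Or.inl h2))
              · by_cases h3 : z ∈ C
                · exact Or.inl (Or.inr (Or.inr h3))
                · exact Or.inr (Or.inr (Or.inr (hmemD z h1 h2 h3)))
          rw [huniv] at hglue
          exact colorable_of_goodOn_univ G hglue
        -- now use the induction hypothesis on the pieces with the extra edge
        have hC₂insc : (insert x C₂).card ≤ n := by
          have : insert x C₂ ⊆ P₂ := Finset.insert_subset_insert x (Finset.subset_insert y C₂)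
          exact (Finset.card_le_card this).trans hP₂card
        have hTinsc : (insert x T).card ≤ n := by
          have : insert x T ⊆ P₁ := Finset.insert_subset_insert x (Finset.subset_insert y T)
          exact (Finset.card_le_card this).trans hP₁card
        have hTc : T.card ≤ n := (Finset.card_le_card (Finset.subset_insert x T)).trans hTinsc
        have hC₂c : C₂.card ≤ n := (Finset.card_le_card (Finset.subset_insert x C₂)).trans hC₂insc
        have hmemD₁ : ∀ z, z ≠ x → z ≠ y → z ∉ T → z ∈ C₂ := fun z h1 h2 h3 => hmemC₂ z h1 h2 h3
        have hmemD₂ : ∀ z, z ≠ x → z ≠ y → z ∉ C₂ → z ∈ T := by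
          intro z h1 h2 h3
          by_contra h4
          exact h3 (hmemC₂ z h1 h2 h4)
        by_cases hcf₁ : (addPair G P₁ x y hxy).CliqueFree (k + 1)
        · by_cases hcf₂ : (addPair G P₂ x y hxy).CliqueFree (k + 1)
          · -- both pieces can be colored with x, y receiving distinct colors
            have hcol₁ : (addPair G P₁ x y hxy).Colorable k := by
              apply ih
              · rw [Fintype.card_coe]; exact hP₁card
              · intro a
                obtain ⟨w, hwC₂, hwadj⟩ := hxnbC₂
                obtain ⟨w', hw'C₂, hw'adj⟩ := hynbC₂
                exact addPair_degree_le G P₁ x y hxy hxP₁ hyP₁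
                  (hbound x P₁ ⟨w, hwadj, hwP₁ w hwC₂⟩)
                  (hbound y P₁ ⟨w', hw'adj, hwP₁ w' hw'C₂⟩) hdeg a
              · exact hcf₁
            have hcol₂ : (addPair G P₂ x y hxy).Colorable k := by
              apply ih
              · rw [Fintype.card_coe]; exact hP₂card
              · intro a
                obtain ⟨w, hwT, hwadj⟩ := hxnbT
                obtain ⟨w', hw'T, hw'adj⟩ := hynbT
                exact addPair_degree_le G P₂ x y hxy hxP₂ hyP₂
                  (hbound x P₂ ⟨w, hwadj, hwP₂ w hwT⟩)
                  (hbound y P₂ ⟨w', hw'adj, hwP₂ w' hw'T⟩) hdeg a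
              · exact hcf₂
            obtain ⟨c₁, hc₁, hd₁⟩ := addPair_goodOn G P₁ x y hxy hxP₁ hyP₁ hk0 hcol₁
            obtain ⟨c₂, hc₂, hd₂⟩ := addPair_goodOn G P₂ x y hxy hxP₂ hyP₂ hk0 hcol₂
            exact glueDiff c₁ c₂ hc₁ hc₂ hd₁ hd₂
          · -- a clique through the pair inside P₂ : forced same color
            obtain ⟨S, hSsub, hxS, hyS, hScard, hSadj⟩ :=
              addPair_clique_structure G P₂ x y hxy hcf hcf₂
            exact sameCase C₂ T hxC₂ hyC₂ hxT hyT (fun z h1 h2 => hdisj z h2 h1)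
              hmemD₂ hcl₂ hclT hxnbT hynbT hC₂insc hTc S
              (fun z hz => by exact_mod_cast hSsub (Finset.mem_coe.2 hz))
              hxS hyS hScard hSadj
        · -- a clique through the pair inside P₁ : forced same color
          obtain ⟨S, hSsub, hxS, hyS, hScard, hSadj⟩ :=
            addPair_clique_structure G P₁ x y hxy hcf hcf₁
          exact sameCase T C₂ hxT hyT hxC₂ hyC₂ hdisj
            hmemD₁ hclT hcl₂ hxnbC₂ hynbC₂ hTinsc hC₂c S
            (fun z hz => by exact_mod_cast hSsub (Finset.mem_coe.2 hz))
            hxS hyS hScard hSadj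


    have hcut2 : ∀ (x y : V) (T : Finset V), x ≠ y → T.Nonempty → x ∉ T → y ∉ T →
        (∀ u ∈ T, ∀ w, G.Adj u w → w ≠ x → w ≠ y → w ∈ T) →
        insert x (insert y T) = Finset.univ := by
      intro x y T hxy hne hx hy hcl
      by_contra h
      exact h4 ⟨x, y, hxy, T, hne, hx, hy, hcl, h⟩
    -- Case 5: 3-connected-ish
    -- first, find an induced path a - b - c
    have htriple : ∃ a b c : V, G.Adj a b ∧ G.Adj b c ∧ ¬ G.Adj a c ∧ a ≠ c := by
      by_contra htr
      push_neg at htr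
      obtain ⟨a⟩ := Fintype.card_pos_iff.1 (Nat.pos_of_ne_zero hV)
      have hTcl : ∀ u ∈ insert a (G.neighborFinset a), ∀ w, G.Adj u w →
          w ∈ insert a (G.neighborFinset a) := by
        intro u hu w hadj
        rcases Finset.mem_insert.1 hu with rfl | hu
        · exact Finset.mem_insert.2 (Or.inr ((G.mem_neighborFinset u w).2 hadj))
        · by_cases hwa : w = a
          · exact Finset.mem_insert.2 (Or.inl hwa)
          · have hau : G.Adj a u := (G.mem_neighborFinset a u).1 hu
            by_cases haw : G.Adj a w
            · exact Finset.mem_insert.2 (Or.inr ((G.mem_neighborFinset a w).2 haw))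
            · exact absurd (htr a u w hau hadj haw) (Ne.symm hwa)
      have hTuniv : ∀ z, z ∈ insert a (G.neighborFinset a) :=
        hconn _ ⟨a, Finset.mem_insert_self _ _⟩ hTcl
      apply hcf Finset.univ
      constructor
      · intro u hu w hw huw
        rcases Finset.mem_insert.1 (hTuniv u) with rfl | hu'
        · rcases Finset.mem_insert.1 (hTuniv w) with rfl | hw'
          · exact absurd rfl huw
          · exact (G.mem_neighborFinset u w).1 hw'
        · rcases Finset.mem_insert.1 (hTuniv w) with rfl | hw'
          · exact ((G.mem_neighborFinset w u).1 hu').symm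
          · have h1 : G.Adj u a := ((G.mem_neighborFinset a u).1 hu').symm
            have h2 : G.Adj a w := (G.mem_neighborFinset a w).1 hw'
            by_contra hnadj
            exact huw (htr u a w h1 h2 hnadj)
      · have : Finset.univ = insert a (G.neighborFinset a) :=
          Finset.eq_univ_iff_forall.2 hTuniv |>.symm
        rw [this, Finset.card_insert_of_notMem (G.notMem_neighborFinset_self a), hreg a]
    obtain ⟨a, b, c, hab, hbc, hac, hacne⟩ := htriple
    have hbne : b ≠ a ∧ b ≠ c := ⟨fun h => G.loopless.irrefl a (h ▸ hab), fun h => G.loopless.irrefl c (h ▸ hbc)⟩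
    have hAcompl : Finset.univ \ (Finset.univ \ ({a, c} : Finset V)) = {a, c} := by
      rw [Finset.sdiff_sdiff_self_left, Finset.univ_inter]
    have hgood0 : GoodOn G (fun _ => (⟨0, hk0⟩ : Fin k))
        (Finset.univ \ (Finset.univ \ ({a, c} : Finset V))) := by
      rw [hAcompl]
      intro u hu w hw hadj
      simp only [Finset.mem_insert, Finset.mem_singleton] at hu hw
      rcases hu with rfl | rfl <;> rcases hw with rfl | rfl
      · exact absurd hadj (G.loopless.irrefl _)
      · exact absurd hadj hac
      · exact absurd hadj.symm hac
      · exact absurd hadj (G.loopless.irrefl _)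
    obtain ⟨cc, -, hcc⟩ := greedy_ext G (Finset.univ \ ({a, c} : Finset V)) Finset.univ
      (Finset.subset_univ _) (fun _ => (⟨0, hk0⟩ : Fin k)) hgood0 (by
        intro T hT hTne
        have himg : ∀ v : V, ((G.neighborFinset v ∩
            (Finset.univ \ (Finset.univ \ ({a, c} : Finset V)))).image
            (fun _ => (⟨0, hk0⟩ : Fin k))).card ≤ 1 := by
          intro v
          apply Finset.card_le_one.2
          intro p hp q hq
          rw [Finset.mem_image] at hp hq
          obtain ⟨_, _, rfl⟩ := hp
          obtain ⟨_, _, rfl⟩ := hq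
          rfl
        have hTac : ∀ z ∈ T, z ≠ a ∧ z ≠ c := by
          intro z hz
          have := hT hz
          rw [Finset.mem_sdiff] at this
          constructor
          · intro h; exact this.2 (by rw [h]; exact Finset.mem_insert_self _ _)
          · intro h; exact this.2 (by rw [h]; exact Finset.mem_insert.2 (Or.inr (Finset.mem_singleton_self c)))
        by_cases hbT : b ∈ T
        · refine ⟨b, hbT, ?_⟩
          have hsub : G.neighborFinset b ∩ T ⊆ G.neighborFinset b \ {a, c} := by
            intro z hz
            rw [Finset.mem_inter] at hz
            rw [Finset.mem_sdiff]
            refine ⟨hz.1, ?_⟩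
            intro hmem
            rcases Finset.mem_insert.1 hmem with rfl | h
            · exact (hTac z hz.2).1 rfl
            · exact (hTac z hz.2).2 (Finset.mem_singleton.1 h)
          have hcard := Finset.card_le_card hsub
          have hsubAC : ({a, c} : Finset V) ⊆ G.neighborFinset b := by
            intro z hz
            rcases Finset.mem_insert.1 hz with rfl | h
            · exact (G.mem_neighborFinset b z).2 hab.symm
            · rw [Finset.mem_singleton] at h; exact (G.mem_neighborFinset b _).2 (h ▸ hbc)
          rw [Finset.card_sdiff_of_subset hsubAC, hreg b, Finset.card_insert_of_notMem
            (fun h => hacne (Finset.mem_singleton.1 h)), Finset.card_singleton] at hcard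
          have := himg b
          omega
        · by_cases hesc : ∃ v ∈ T, ∃ w, G.Adj v w ∧ w ∉ T ∧ w ≠ a ∧ w ≠ c
          · obtain ⟨v, hvT, w, hadj, hwT, hwa, hwc⟩ := hesc
            refine ⟨v, hvT, ?_⟩
            have hwN : w ∈ G.neighborFinset v := (G.mem_neighborFinset v w).2 hadj
            by_cases hvA : ∃ d, d ∈ G.neighborFinset v ∩ ({a, c} : Finset V)
            · obtain ⟨d, hd⟩ := hvA
              rw [Finset.mem_inter] at hd
              have hsub : G.neighborFinset v ∩ T ⊆ ((G.neighborFinset v).erase w).erase d := by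
                intro z hz
                rw [Finset.mem_inter] at hz
                refine Finset.mem_erase.2 ⟨?_, Finset.mem_erase.2 ⟨?_, hz.1⟩⟩
                · intro h
                  rcases Finset.mem_insert.1 hd.2 with rfl | hdc
                  · exact (hTac z hz.2).1 h
                  · exact (hTac z hz.2).2 (h.trans (Finset.mem_singleton.1 hdc))
                · intro h; exact hwT (h ▸ hz.2)
              have hcard := Finset.card_le_card hsub
              have hdw : d ≠ w := by
                intro h
                rcases Finset.mem_insert.1 hd.2 with rfl | hdc
                · exact hwa h.symm
                · exact hwc ((Finset.mem_singleton.1 hdc) ▸ h).symm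
              rw [Finset.card_erase_of_mem (Finset.mem_erase.2 ⟨hdw, hd.1⟩),
                Finset.card_erase_of_mem hwN, hreg v] at hcard
              have := himg v
              omega
            · push_neg at hvA
              have himg0 : ((G.neighborFinset v ∩
                  (Finset.univ \ (Finset.univ \ ({a, c} : Finset V)))).image
                  (fun _ => (⟨0, hk0⟩ : Fin k))).card = 0 := by
                rw [hAcompl]
                rw [Finset.card_eq_zero, Finset.image_eq_empty]
                exact Finset.eq_empty_of_forall_notMem hvA
              rw [himg0]
              have hsub : G.neighborFinset v ∩ T ⊆ (G.neighborFinset v).erase w :=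
                fun z hz => Finset.mem_erase.2 ⟨fun h => hwT (h ▸ (Finset.mem_inter.1 hz).2),
                  (Finset.mem_inter.1 hz).1⟩
              have hcard := Finset.card_le_card hsub
              rw [Finset.card_erase_of_mem hwN, hreg v] at hcard
              omega
          · exfalso
            push_neg at hesc
            apply hbT
            have hTcl : ∀ u ∈ T, ∀ w, G.Adj u w → w ≠ a → w ≠ c → w ∈ T := by
              intro u hu w hadj hwa hwc
              by_contra hwT
              exact hwc (hesc u hu w hadj hwT hwa)
            have := hcut2 a c T hacne hTne
              (fun h => (hTac a h).1 rfl) (fun h => (hTac c h).2 rfl) hTcl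
            have hbmem : b ∈ insert a (insert c T) := this ▸ Finset.mem_univ b
            rcases Finset.mem_insert.1 hbmem with h | h
            · exact absurd h hbne.1
            · rcases Finset.mem_insert.1 h with h | h
              · exact absurd h hbne.2
              · exact h)
    exact colorable_of_goodOn_univ G hcc

end BrooksAux

theorem brooks_contrapositive {V : Type*} [Fintype V] (G : SimpleGraph V)
    [DecidableRel G.Adj]
    (hchi : G.chromaticNumber = (G.maxDegree + 1 : ℕ))
    (h4 : 4 ≤ G.maxDegree + 1) :
    ¬ G.CliqueFree (G.maxDegree + 1) := by
  intro hcf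
  haveI : DecidableEq V := Classical.decEq V
  have hk : 3 ≤ G.maxDegree := by omega
  have hcol : G.Colorable G.maxDegree :=
    brooks_main G.maxDegree hk (Fintype.card V) V G le_rfl
      (fun v => G.degree_le_maxDegree v) hcf
  have hle := hcol.chromaticNumber_le
  rw [hchi] at hle
  have : G.maxDegree + 1 ≤ G.maxDegree := by exact_mod_cast hle
  omega
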